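/- arXiv:1304.3150 — 2 statements merged into one kernel-verified Lean document; each statement's English description precedes it below -/
import Mathlib

section
/- Let H be a complex Hilbert space and let S be a positive invertible bounded self-adjoint operator on H. Then for every ω ∈ H, 4 ∫₀^∞ y · ‖S (exp(−y·S) ω)‖² dy = ‖ω‖², where exp(−y·S) denotes the operator exponential and the integral is a Lebesgue integral over y ∈ (0, ∞). -/
set_option maxHeartbeats 1000000
set_option synthInstance.maxHeartbeats 1000000

open MeasureTheory Set Filter NormedSpace RCLike ContinuousLinearMap Topology

local notation "⟪" x ", " y "⟫" => @inner ℂ _ _ x y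

private lemma lp_cauchy_schwarz
    {H : Type*} [NormedAddCommGroup H] [InnerProductSpace ℂ H] [CompleteSpace H]
    (S : H →L[ℂ] H) (hpos : S.IsPositive) (x y : H) :
    (re ⟪S x, y⟫) ^ 2 ≤ re ⟪S x, x⟫ * re ⟪S y, y⟫ := by
  have hsym : ∀ a b : H, ⟪S a, b⟫ = ⟪a, S b⟫ :=
    ContinuousLinearMap.isSelfAdjoint_iff_isSymmetric.mp hpos.isSelfAdjoint
  have key : ∀ t : ℝ, 0 ≤ re ⟪S y, y⟫ * (t * t) + (2 * re ⟪S x, y⟫) * t + re ⟪S x, x⟫ := by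
    intro t
    have h0 : 0 ≤ re ⟪S (x + (t : ℂ) • y), x + (t : ℂ) • y⟫ := hpos.re_inner_nonneg_left _
    have hexp : ⟪S (x + (t : ℂ) • y), x + (t : ℂ) • y⟫
        = ⟪S x, x⟫ + (t : ℂ) * ⟪S x, y⟫ + (t : ℂ) * ⟪S y, x⟫ + (t : ℂ) * ((t : ℂ) * ⟪S y, y⟫) := by
      rw [map_add, S.map_smul, inner_add_left, inner_add_right, inner_add_right,
        inner_smul_left, inner_smul_right, inner_smul_right, inner_smul_left,
        Complex.conj_ofReal]
      ring
    have hyx : re ⟪S y, x⟫ = re ⟪S x, y⟫ := by rw [hsym y x, inner_re_symm]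
    rw [hexp, map_add, map_add, map_add] at h0
    simp only [RCLike.re_to_complex, Complex.re_ofReal_mul] at h0 hyx ⊢
    rw [hyx] at h0
    nlinarith [h0]
  have hdisc := discrim_le_zero key
  rw [discrim] at hdisc
  nlinarith [hdisc]

/-- Littlewood–Paley identity: for a positive invertible bounded self-adjoint operator `S` on a
complex Hilbert space and any `ω`, `4 ∫₀^∞ y ‖S e^{-yS} ω‖² dy = ‖ω‖²`. -/
theorem littlewood_paley_identity
    {H : Type*} [NormedAddCommGroup H] [InnerProductSpace ℂ H] [CompleteSpace H]
    (S : H →L[ℂ] H) (hS : 0 ≤ S) (hS' : IsUnit S) (ω : H) :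
    4 * ∫ y in Set.Ioi (0 : ℝ), y * ‖S (NormedSpace.exp ((-y) • S) ω)‖ ^ 2 = ‖ω‖ ^ 2 := by
  rcases subsingleton_or_nontrivial H with hH | hH
  · simp [Subsingleton.elim ω 0]
  have hpos : S.IsPositive := (ContinuousLinearMap.nonneg_iff_isPositive S).mp hS
  have hsym : ∀ a b : H, ⟪S a, b⟫ = ⟪a, S b⟫ :=
    ContinuousLinearMap.isSelfAdjoint_iff_isSymmetric.mp hpos.isSelfAdjoint
  obtain ⟨V, hV⟩ := hS'
  have hinv : ∀ x : H, V.inv (S x) = x := by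
    intro x
    have h1 : (V.inv * V.val) x = x := by rw [V.inv_val]; rfl
    rwa [ContinuousLinearMap.mul_apply, hV] at h1
  obtain ⟨x₀, hx₀⟩ := exists_ne (0 : H)
  have hSnorm : 0 < ‖S‖ := by
    refine norm_pos_iff.mpr fun h => hx₀ ?_
    rw [← hinv x₀, h]; simp
  have hVnorm : 0 < ‖V.inv‖ := by
    refine norm_pos_iff.mpr fun h => hx₀ ?_
    rw [← hinv x₀, h]; simp
  set c : ℝ := (‖V.inv‖ ^ 2 * ‖S‖)⁻¹ with hc_def
  have hA : 0 < ‖V.inv‖ ^ 2 * ‖S‖ := by positivity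
  have hc : 0 < c := by positivity
  have hcoer : ∀ x : H, c * ‖x‖ ^ 2 ≤ re ⟪S x, x⟫ := by
    intro x
    have hx : ‖x‖ ≤ ‖V.inv‖ * ‖S x‖ := by
      calc ‖x‖ = ‖V.inv (S x)‖ := by rw [hinv]
        _ ≤ ‖V.inv‖ * ‖S x‖ := (V.inv).le_opNorm _
    have hcs := lp_cauchy_schwarz S hpos x (S x)
    rw [inner_self_eq_norm_sq] at hcs
    have h2 : re ⟪S (S x), S x⟫ ≤ ‖S‖ * ‖S x‖ ^ 2 := by
      calc re ⟪S (S x), S x⟫ ≤ ‖S (S x)‖ * ‖S x‖ := re_inner_le_norm _ _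
        _ ≤ (‖S‖ * ‖S x‖) * ‖S x‖ := by
            have := S.le_opNorm (S x)
            nlinarith [norm_nonneg (S x)]
        _ = ‖S‖ * ‖S x‖ ^ 2 := by ring
    have h3 : 0 ≤ re ⟪S x, x⟫ := hpos.re_inner_nonneg_left x
    rcases eq_or_ne (S x) 0 with h | h
    · have hx0 : x = 0 := by rw [← hinv x, h]; simp
      simpa [hx0] using h3
    · have hX : (0:ℝ) < ‖S x‖ ^ 2 := by
        have : 0 < ‖S x‖ := norm_pos_iff.mpr h
        positivity
      have h4 := mul_le_mul_of_nonneg_left h2 h3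
      have key : ‖S x‖ ^ 2 ≤ ‖S‖ * re ⟪S x, x⟫ := by nlinarith [hcs, h4, hX]
      have hx2 : ‖x‖ ^ 2 ≤ ‖V.inv‖ ^ 2 * ‖S x‖ ^ 2 := by
        nlinarith [hx, norm_nonneg x, norm_nonneg (S x)]
      have hfin : ‖x‖ ^ 2 ≤ (‖V.inv‖ ^ 2 * ‖S‖) * re ⟪S x, x⟫ := by nlinarith [sq_nonneg ‖V.inv‖]
      calc c * ‖x‖ ^ 2 ≤ c * ((‖V.inv‖ ^ 2 * ‖S‖) * re ⟪S x, x⟫) :=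
            mul_le_mul_of_nonneg_left hfin hc.le
        _ = re ⟪S x, x⟫ := by rw [hc_def, ← mul_assoc, inv_mul_cancel₀ hA.ne', one_mul]
  -- the semigroup orbit
  set u : ℝ → H := fun y => exp (y • (-S)) ω with hu_def
  have hcomm : ∀ (y : ℝ) (v : H), exp (y • (-S)) (S v) = S (exp (y • (-S)) v) := by
    intro y v
    have hcm : Commute (exp (y • (-S))) S :=
      (((Commute.refl S).neg_left).smul_left y).exp_left
    have := congrArg (fun T : H →L[ℂ] H => T v) hcm.eq
    simpa only [ContinuousLinearMap.mul_apply] using this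
  have hu : ∀ y : ℝ, HasDerivAt u (-(S (u y))) y := by
    intro y
    have h1 : HasDerivAt (fun t : ℝ => exp (t • (-S))) (exp (y • (-S)) * (-S)) y :=
      hasDerivAt_exp_smul_const (-S) y
    have h2 := (((ContinuousLinearMap.apply ℂ H ω).restrictScalars ℝ).hasFDerivAt).comp_hasDerivAt y h1
    simp only [ContinuousLinearMap.coe_restrictScalars', Function.comp_def,
      ContinuousLinearMap.apply_apply, ContinuousLinearMap.mul_apply,
      ContinuousLinearMap.neg_apply, map_neg] at h2
    have h3 := hcomm y ω
    rw [h3] at h2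
    exact h2
  have hu_diff : Differentiable ℝ u := fun y => (hu y).differentiableAt
  have hu_cont : Continuous u := hu_diff.continuous
  set g : ℝ → ℝ := fun y => re ⟪u y, u y⟫ with hg_def
  set q : ℝ → ℝ := fun y => re ⟪S (u y), u y⟫ with hq_def
  have hgnorm : ∀ y, g y = ‖u y‖ ^ 2 := fun y => inner_self_eq_norm_sq _
  have hg0 : ∀ y, 0 ≤ g y := fun y => by rw [hgnorm]; positivity
  have hq0 : ∀ y, 0 ≤ q y := fun y => hpos.re_inner_nonneg_left _
  have hqle : ∀ y, q y ≤ ‖S‖ * g y := by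
    intro y
    calc q y ≤ ‖S (u y)‖ * ‖u y‖ := re_inner_le_norm _ _
      _ ≤ (‖S‖ * ‖u y‖) * ‖u y‖ := by
          have := S.le_opNorm (u y)
          nlinarith [norm_nonneg (u y)]
      _ = ‖S‖ * g y := by rw [hgnorm]; ring
  have hg' : ∀ y : ℝ, HasDerivAt g (-2 * q y) y := by
    intro y
    have h1 := HasDerivAt.inner ℂ (hu y) (hu y)
    have h2 := (reCLM (K := ℂ)).hasFDerivAt.comp_hasDerivAt y h1
    refine HasDerivAt.congr_deriv h2 ?_
    simp only [Function.comp_def, reCLM_apply, map_add, inner_neg_left, inner_neg_right, map_neg]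
    rw [inner_re_symm (u y) (S (u y))]
    simp only [hq_def]
    ring
  have hq' : ∀ y : ℝ, HasDerivAt q (-2 * ‖S (u y)‖ ^ 2) y := by
    intro y
    have hSu := ((S.restrictScalars ℝ).hasFDerivAt).comp_hasDerivAt y (hu y)
    simp only [ContinuousLinearMap.coe_restrictScalars', Function.comp_def] at hSu
    have h1 := HasDerivAt.inner ℂ hSu (hu y)
    have h2 := (reCLM (K := ℂ)).hasFDerivAt.comp_hasDerivAt y h1
    refine HasDerivAt.congr_deriv h2 ?_
    simp only [Function.comp_def, reCLM_apply, map_add, map_neg, inner_neg_left, inner_neg_right]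
    rw [hsym (S (u y)) (u y)]
    rw [inner_self_eq_norm_sq (𝕜 := ℂ) (S (u y))]
    ring
  -- the function whose derivative is the integrand
  set h : ℝ → ℝ := fun y => -2 * (y * q y) - g y with hh_def
  have hh : ∀ y : ℝ, HasDerivAt h (4 * (y * ‖S (u y)‖ ^ 2)) y := by
    intro y
    have h1 : HasDerivAt (fun y : ℝ => y * q y) (1 * q y + y * (-2 * ‖S (u y)‖ ^ 2)) y :=
      (hasDerivAt_id y).mul (hq' y)
    have h2 := (h1.const_mul (-2 : ℝ)).sub (hg' y)
    refine HasDerivAt.congr_deriv h2 ?_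
    ring
  -- exponential decay of g
  have hG : ∀ y : ℝ, HasDerivAt (fun y => Real.exp (2 * c * y) * g y)
      (Real.exp (2 * c * y) * (2 * c * g y + -2 * q y)) y := by
    intro y
    have he : HasDerivAt (fun y : ℝ => Real.exp (2 * c * y)) (Real.exp (2 * c * y) * (2 * c)) y := by
      simpa using (((hasDerivAt_id y).const_mul (2 * c)).exp)
    have := he.mul (hg' y)
    refine HasDerivAt.congr_deriv this ?_
    ring
  have hGanti : Antitone (fun y => Real.exp (2 * c * y) * g y) := by
    apply antitone_of_deriv_nonpos
    · exact fun y => (hG y).differentiableAt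
    · intro y
      rw [(hG y).deriv]
      have h1 : c * g y ≤ q y := by
        have := hcoer (u y)
        rwa [← hgnorm] at this
      have h2 : 2 * c * g y + -2 * q y ≤ 0 := by linarith
      exact mul_nonpos_of_nonneg_of_nonpos (Real.exp_pos _).le h2
  have hu0 : u 0 = ω := by
    show exp ((0:ℝ) • (-S)) ω = ω
    rw [zero_smul, exp_zero, ContinuousLinearMap.one_apply]
  have hg_at0 : g 0 = ‖ω‖ ^ 2 := by rw [hgnorm, hu0]
  have hdecay : ∀ y : ℝ, 0 ≤ y → g y ≤ Real.exp (-(c * y)) * ‖ω‖ ^ 2 := by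
    intro y hy
    have h1 : Real.exp (2 * c * y) * g y ≤ Real.exp (2 * c * 0) * g 0 := hGanti hy
    rw [mul_zero, Real.exp_zero, one_mul, hg_at0] at h1
    have he1 : Real.exp (-(c * y)) ≤ 1 := Real.exp_le_one_iff.mpr (by nlinarith)
    have he2 : 1 ≤ Real.exp (c * y) := Real.one_le_exp_iff.mpr (by positivity)
    have hkey : Real.exp (2 * c * y) = Real.exp (c*y) * Real.exp (c*y) := by
      rw [← Real.exp_add]; ring_nf
    have hen : Real.exp (-(c * y)) = (Real.exp (c * y))⁻¹ := Real.exp_neg _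
    have hep : (0:ℝ) < Real.exp (c * y) := Real.exp_pos _
    rw [hen, ← sub_nonneg]
    have hgy := hg0 y
    have expand : (Real.exp (c * y))⁻¹ * ‖ω‖ ^ 2 - g y
        = (Real.exp (c * y))⁻¹ * (‖ω‖ ^ 2 - Real.exp (c*y) * g y) := by
      field_simp
    rw [expand]
    apply mul_nonneg (by positivity)
    have : Real.exp (c*y) * g y ≤ Real.exp (2*c*y) * g y := by
      rw [hkey]
      nlinarith [mul_nonneg (mul_nonneg hep.le (sub_nonneg.mpr he2)) hgy]
    linarith
  -- elementary bound `y e^{-cy} ≤ (1/d) e^{-dy}` with `d = c/2`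
  set d : ℝ := c / 2 with hd_def
  have hd : 0 < d := by positivity
  have hyexp : ∀ y : ℝ, 0 ≤ y → y * Real.exp (-(c * y)) ≤ (1/d) * Real.exp (-(d * y)) := by
    intro y hy
    have h1 : d * y ≤ Real.exp (d * y) := by linarith [Real.add_one_le_exp (d * y)]
    have h2 : y ≤ (1/d) * Real.exp (d * y) := by
      rw [one_div, inv_mul_eq_div, le_div_iff₀ hd]
      linarith
    have h3 : Real.exp (-(c * y)) = Real.exp (-(d * y)) * Real.exp (-(d * y)) := by
      rw [← Real.exp_add]; congr 1; rw [hd_def]; ring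
    have h4 : Real.exp (d * y) * Real.exp (-(d * y)) = 1 := by
      rw [← Real.exp_add]; simp
    have h5 : y * Real.exp (-(c * y))
        ≤ ((1/d) * Real.exp (d * y)) * (Real.exp (-(d * y)) * Real.exp (-(d * y))) := by
      rw [h3]
      exact mul_le_mul_of_nonneg_right h2 (by positivity)
    have h6 : ((1/d) * Real.exp (d * y)) * (Real.exp (-(d * y)) * Real.exp (-(d * y)))
        = (1/d) * ((Real.exp (d * y) * Real.exp (-(d * y))) * Real.exp (-(d * y))) := by ring
    rw [h6, h4, one_mul] at h5
    exact h5
  -- pointwise bound for the integrand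
  set K : ℝ := (4 * ‖S‖ ^ 2 * ‖ω‖ ^ 2) * (1/d) with hK_def
  have hSu2 : ∀ y : ℝ, ‖S (u y)‖ ^ 2 ≤ ‖S‖ ^ 2 * g y := by
    intro y
    have h1 := S.le_opNorm (u y)
    rw [hgnorm]
    nlinarith [norm_nonneg (S (u y)), norm_nonneg (u y), hSnorm.le]
  have hbnd : ∀ y : ℝ, 0 ≤ y → 4 * (y * ‖S (u y)‖ ^ 2) ≤ K * Real.exp (-(d * y)) := by
    intro y hy
    have b1 : y * ‖S (u y)‖ ^ 2 ≤ y * (‖S‖ ^ 2 * g y) :=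
      mul_le_mul_of_nonneg_left (hSu2 y) hy
    have b2 : g y ≤ Real.exp (-(c * y)) * ‖ω‖ ^ 2 := hdecay y hy
    have b3 : y * (‖S‖ ^ 2 * g y) ≤ y * (‖S‖ ^ 2 * (Real.exp (-(c * y)) * ‖ω‖ ^ 2)) := by
      apply mul_le_mul_of_nonneg_left _ hy
      exact mul_le_mul_of_nonneg_left b2 (by positivity)
    have b4 : y * (‖S‖ ^ 2 * (Real.exp (-(c * y)) * ‖ω‖ ^ 2))
        = (‖S‖ ^ 2 * ‖ω‖ ^ 2) * (y * Real.exp (-(c * y))) := by ring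
    have b5 : (‖S‖ ^ 2 * ‖ω‖ ^ 2) * (y * Real.exp (-(c * y)))
        ≤ (‖S‖ ^ 2 * ‖ω‖ ^ 2) * ((1/d) * Real.exp (-(d * y))) :=
      mul_le_mul_of_nonneg_left (hyexp y hy) (by positivity)
    have : y * ‖S (u y)‖ ^ 2 ≤ (‖S‖ ^ 2 * ‖ω‖ ^ 2) * ((1/d) * Real.exp (-(d * y))) := by
      calc y * ‖S (u y)‖ ^ 2 ≤ y * (‖S‖ ^ 2 * g y) := b1
        _ ≤ y * (‖S‖ ^ 2 * (Real.exp (-(c * y)) * ‖ω‖ ^ 2)) := b3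
        _ = (‖S‖ ^ 2 * ‖ω‖ ^ 2) * (y * Real.exp (-(c * y))) := b4
        _ ≤ (‖S‖ ^ 2 * ‖ω‖ ^ 2) * ((1/d) * Real.exp (-(d * y))) := b5
    calc 4 * (y * ‖S (u y)‖ ^ 2)
        ≤ 4 * ((‖S‖ ^ 2 * ‖ω‖ ^ 2) * ((1/d) * Real.exp (-(d * y)))) := by linarith
      _ = K * Real.exp (-(d * y)) := by rw [hK_def]; ring
  -- integrability of the integrand
  have hf'cont : Continuous (fun y : ℝ => 4 * (y * ‖S (u y)‖ ^ 2)) := by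
    exact continuous_const.mul (continuous_id.mul (((S.continuous.comp hu_cont).norm).pow 2))
  have hint : IntegrableOn (fun y : ℝ => 4 * (y * ‖S (u y)‖ ^ 2)) (Ioi (0:ℝ)) := by
    have hexpint : IntegrableOn (fun y : ℝ => K * Real.exp (-d * y)) (Ioi (0:ℝ)) :=
      (exp_neg_integrableOn_Ioi 0 hd).const_mul K
    simp only [neg_mul] at hexpint
    apply Integrable.mono' hexpint (hf'cont.aestronglyMeasurable.restrict)
    filter_upwards [ae_restrict_mem measurableSet_Ioi] with y hy
    have hy0 : (0:ℝ) ≤ y := le_of_lt hy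
    rw [Real.norm_eq_abs, abs_of_nonneg (by positivity)]
    exact hbnd y hy0
  -- the boundary term tends to zero at infinity
  have hb : ∀ y : ℝ, 0 ≤ y →
      ‖h y‖ ≤ (2 * ‖S‖ * ‖ω‖ ^ 2 * (1/d) + ‖ω‖ ^ 2) * Real.exp (-(d * y)) := by
    intro y hy
    have habs : ‖h y‖ ≤ 2 * (y * q y) + g y := by
      have hyq : 0 ≤ y * q y := mul_nonneg hy (hq0 y)
      have : h y = -2 * (y * q y) - g y := rfl
      rw [this, Real.norm_eq_abs, abs_of_nonpos (by nlinarith [hg0 y])]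
      linarith
    have b2 : g y ≤ Real.exp (-(c * y)) * ‖ω‖ ^ 2 := hdecay y hy
    have e3 : Real.exp (-(c * y)) ≤ Real.exp (-(d * y)) := by
      apply Real.exp_le_exp.mpr
      rw [hd_def]; nlinarith
    have e1 : y * q y ≤ ‖S‖ * ‖ω‖ ^ 2 * (y * Real.exp (-(c * y))) := by
      have step : y * q y ≤ y * (‖S‖ * (Real.exp (-(c * y)) * ‖ω‖ ^ 2)) := by
        apply mul_le_mul_of_nonneg_left _ hy
        calc q y ≤ ‖S‖ * g y := hqle y
          _ ≤ ‖S‖ * (Real.exp (-(c * y)) * ‖ω‖ ^ 2) :=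
              mul_le_mul_of_nonneg_left b2 hSnorm.le
      have : y * (‖S‖ * (Real.exp (-(c * y)) * ‖ω‖ ^ 2))
          = ‖S‖ * ‖ω‖ ^ 2 * (y * Real.exp (-(c * y))) := by ring
      linarith
    have t1 : y * q y ≤ ‖S‖ * ‖ω‖ ^ 2 * ((1/d) * Real.exp (-(d * y))) := by
      calc y * q y ≤ ‖S‖ * ‖ω‖ ^ 2 * (y * Real.exp (-(c * y))) := e1
        _ ≤ ‖S‖ * ‖ω‖ ^ 2 * ((1/d) * Real.exp (-(d * y))) :=
            mul_le_mul_of_nonneg_left (hyexp y hy) (by positivity)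
    have t2 : g y ≤ Real.exp (-(d * y)) * ‖ω‖ ^ 2 :=
      le_trans b2 (mul_le_mul_of_nonneg_right e3 (by positivity))
    calc ‖h y‖ ≤ 2 * (y * q y) + g y := habs
      _ ≤ 2 * (‖S‖ * ‖ω‖ ^ 2 * ((1/d) * Real.exp (-(d * y)))) + Real.exp (-(d * y)) * ‖ω‖ ^ 2 := by
          linarith
      _ = (2 * ‖S‖ * ‖ω‖ ^ 2 * (1/d) + ‖ω‖ ^ 2) * Real.exp (-(d * y)) := by ring
  have htends : Tendsto h atTop (𝓝 0) := by
    have h1 : Tendsto (fun y : ℝ => d * y) atTop atTop :=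
      Tendsto.const_mul_atTop hd tendsto_id
    have hexp0 : Tendsto (fun y : ℝ => Real.exp (-(d * y))) atTop (𝓝 0) :=
      Real.tendsto_exp_neg_atTop_nhds_zero.comp h1
    have h2 := hexp0.const_mul (2 * ‖S‖ * ‖ω‖ ^ 2 * (1/d) + ‖ω‖ ^ 2)
    rw [mul_zero] at h2
    apply squeeze_zero_norm' _ h2
    filter_upwards [eventually_ge_atTop (0:ℝ)] with y hy using hb y hy
  -- fundamental theorem of calculus on `(0, ∞)`
  have hmain := integral_Ioi_of_hasDerivAt_of_tendsto' (a := 0) (m := 0)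
      (fun x _ => hh x) hint htends
  have hh0 : h 0 = -‖ω‖ ^ 2 := by
    have : h 0 = -2 * (0 * q 0) - g 0 := rfl
    rw [this, hg_at0]; ring
  rw [hh0, zero_sub, neg_neg] at hmain
  calc 4 * ∫ y in Ioi (0:ℝ), y * ‖S (exp ((-y) • S) ω)‖ ^ 2
      = 4 * ∫ y in Ioi (0:ℝ), y * ‖S (u y)‖ ^ 2 := by
        rw [hu_def]
        simp only [neg_smul, smul_neg]
    _ = ∫ y in Ioi (0:ℝ), 4 * (y * ‖S (u y)‖ ^ 2) := (MeasureTheory.integral_const_mul 4 _).symm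
    _ = ‖ω‖ ^ 2 := hmain
end

section
/- Let H be a complex Hilbert space and let S be a positive invertible bounded self-adjoint operator on H. Then for all ω, η ∈ H, lim_{y → ∞} 4 ∫₀^∞ min(y, z) · ⟨S (exp(−z·S) ω), S (exp(−z·S) η)⟩ dz = ⟨ω, η⟩, where exp(−z·S) denotes the operator exponential and the integral is a Lebesgue integral over z ∈ (0, ∞). -/
set_option maxHeartbeats 2000000
set_option synthInstance.maxHeartbeats 400000
open NormedSpace MeasureTheory Set Filter
namespace LPaux
variable {H : Type*} [NormedAddCommGroup H] [InnerProductSpace ℂ H] [CompleteSpace H]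

local notation "⟪" x ", " y "⟫" => @inner ℂ _ _ x y

lemma exp_neg_smul_eq (S : H →L[ℂ] H) (z : ℝ) :
    exp ((-z) • S) = exp (z • (-S)) := by
  rw [smul_neg, ← neg_smul]

lemma hasDerivAt_exp_apply (S : H →L[ℂ] H) (x : H) (z : ℝ) :
    HasDerivAt (fun z : ℝ => exp ((-z) • S) x) (-(S (exp ((-z) • S) x))) z := by
  have h1 : HasDerivAt (fun u : ℝ => exp (u • (-S))) ((-S) * exp (z • (-S))) z :=
    hasDerivAt_exp_smul_const' (𝕂 := ℝ) (-S) z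
  let L : (H →L[ℂ] H) →L[ℝ] H :=
    (ContinuousLinearMap.apply ℂ H x).restrictScalars ℝ
  have h2 : HasDerivAt (fun u : ℝ => L (exp (u • (-S)))) (L ((-S) * exp (z • (-S)))) z :=
    L.hasFDerivAt.comp_hasDerivAt z h1
  simp only [exp_neg_smul_eq S]
  convert h2 using 2 <;> rfl

lemma symm_of_sa {S : H →L[ℂ] H} (hS : IsSelfAdjoint S) (x y : H) :
    ⟪S x, y⟫ = ⟪x, S y⟫ :=
  (ContinuousLinearMap.isSelfAdjoint_iff_isSymmetric.mp hS) x y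
lemma coercive [Nontrivial H] (S : H →L[ℂ] H) (hS : 0 ≤ S) (hS' : IsUnit S) :
    ∃ ε : ℝ, 0 < ε ∧ ∀ x : H, ε * ‖x‖ ^ 2 ≤ Complex.re ⟪S x, x⟫ := by
  obtain ⟨U, hU⟩ := hS'
  set B : H →L[ℂ] H := ↑U⁻¹ with hB
  have hBS : ∀ x : H, B (S x) = x := by
    intro x
    have : (B * S) x = x := by
      rw [hB, ← hU, Units.inv_mul]; simp
    simpa [ContinuousLinearMap.mul_apply] using this
  set T : H →L[ℂ] H := CFC.sqrt S with hT
  have hT0 : (0 : H →L[ℂ] H) ≤ T := CFC.sqrt_nonneg (a := S)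
  have hTsa : IsSelfAdjoint T := IsSelfAdjoint.of_nonneg hT0
  have hTT : T * T = S := CFC.sqrt_mul_sqrt_self S hS
  have hTTx : ∀ x : H, T (T x) = S x := by
    intro x
    have := congrArg (fun A : H →L[ℂ] H => A x) hTT
    simpa [ContinuousLinearMap.mul_apply] using this
  -- ‖x‖ ≤ ‖B‖ * ‖T‖ * ‖T x‖
  have key : ∀ x : H, ‖x‖ ≤ ‖B‖ * ‖T‖ * ‖T x‖ := by
    intro x
    calc ‖x‖ = ‖B (S x)‖ := by rw [hBS]
    _ ≤ ‖B‖ * ‖S x‖ := B.le_opNorm _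
    _ = ‖B‖ * ‖T (T x)‖ := by rw [hTTx]
    _ ≤ ‖B‖ * (‖T‖ * ‖T x‖) := by
        exact mul_le_mul_of_nonneg_left (T.le_opNorm _) (norm_nonneg B)
    _ = ‖B‖ * ‖T‖ * ‖T x‖ := by ring
  have re_eq : ∀ c : ℂ, Complex.re c = RCLike.re c := fun _ => rfl
  have hreT : ∀ x : H, Complex.re ⟪S x, x⟫ = ‖T x‖ ^ 2 := by
    intro x
    rw [← hTTx, symm_of_sa hTsa, re_eq, inner_self_eq_norm_sq]
  have h1 : B ≠ 0 := by
    intro h0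
    obtain ⟨x, hx⟩ := exists_ne (0 : H)
    have := hBS x
    rw [h0] at this
    simp at this
    exact hx this.symm
  have h2 : T ≠ 0 := by
    intro h0
    obtain ⟨x, hx⟩ := exists_ne (0 : H)
    apply hx
    have hSx : S x = 0 := by rw [← hTTx, h0]; simp
    have := hBS x
    rw [hSx] at this
    simpa using this.symm
  have hB0 := norm_pos_iff.mpr h1
  have hT0' := norm_pos_iff.mpr h2
  refine ⟨((‖B‖ * ‖T‖) ^ 2)⁻¹, by positivity, fun x => ?_⟩
  rw [hreT, inv_mul_le_iff₀ (by positivity)]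
  calc ‖x‖ ^ 2 ≤ (‖B‖ * ‖T‖ * ‖T x‖) ^ 2 :=
        pow_le_pow_left₀ (norm_nonneg x) (key x) 2
  _ = (‖B‖ * ‖T‖) ^ 2 * ‖T x‖ ^ 2 := by ring
lemma decay (S : H →L[ℂ] H) (hSsa : IsSelfAdjoint S) {ε : ℝ} (hε : 0 < ε)
    (hco : ∀ x : H, ε * ‖x‖ ^ 2 ≤ Complex.re ⟪S x, x⟫) (x : H) {z : ℝ} (hz : 0 ≤ z) :
    ‖exp ((-z) • S) x‖ ≤ Real.exp (-(ε * z)) * ‖x‖ := by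
  set u : ℝ → H := fun w => exp ((-w) • S) x with hu_def
  have hu : ∀ w, HasDerivAt u (-(S (u w))) w := fun w => hasDerivAt_exp_apply S x w
  set n : ℝ → ℝ := fun w => Complex.re ⟪u w, u w⟫ with hn_def
  have hn_eq : ∀ w, n w = ‖u w‖ ^ 2 := fun w => inner_self_eq_norm_sq (𝕜 := ℂ) (u w)
  have hn : ∀ w, HasDerivAt n (-2 * Complex.re ⟪S (u w), u w⟫) w := by
    intro w
    have h := HasDerivAt.inner ℂ (hu w) (hu w)
    have h2 := Complex.reCLM.hasFDerivAt.comp_hasDerivAt w h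
    refine h2.congr_deriv ?_
    simp only [inner_neg_left, inner_neg_right, Complex.reCLM_apply, Complex.add_re,
      Complex.neg_re]
    have := symm_of_sa hSsa (u w) (u w)
    rw [← this]
    ring
  set g : ℝ → ℝ := fun w => Real.exp (2 * ε * w) * n w with hg_def
  have hlin : ∀ w : ℝ, HasDerivAt (fun t : ℝ => 2 * ε * t) (2 * ε) w := by
    intro w
    simpa using (hasDerivAt_id w).const_mul (2 * ε)
  have hg : ∀ w, HasDerivAt g
      (Real.exp (2 * ε * w) * (2 * ε) * n w +
        Real.exp (2 * ε * w) * (-2 * Complex.re ⟪S (u w), u w⟫)) w := by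
    intro w
    exact ((Real.hasDerivAt_exp (2 * ε * w)).comp w (hlin w)).mul (hn w)
  have hg_cont : Continuous g :=
    continuous_iff_continuousAt.mpr fun w => (hg w).differentiableAt.continuousAt
  have anti : AntitoneOn g (Set.Ici 0) := by
    apply antitoneOn_of_deriv_nonpos (convex_Ici 0) hg_cont.continuousOn
    · intro w _
      exact (hg w).differentiableAt.differentiableWithinAt
    · intro w _
      rw [(hg w).deriv, hn_eq w]
      have h1 := hco (u w)
      nlinarith [mul_le_mul_of_nonneg_left h1 (Real.exp_nonneg (2 * ε * w))]
  have hu0 : u 0 = x := by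
    rw [hu_def]
    simp
  have h4 : Real.exp (2 * ε * z) * n z ≤ Real.exp (2 * ε * 0) * n 0 :=
    anti Set.self_mem_Ici (Set.mem_Ici.mpr hz) hz
  have h4' : Real.exp (2 * ε * z) * ‖u z‖ ^ 2 ≤ ‖x‖ ^ 2 := by
    have := h4
    rw [hn_eq z, hn_eq 0, hu0] at this
    simpa using this
  have h5 : ‖u z‖ ^ 2 ≤ Real.exp (-(2 * ε * z)) * ‖x‖ ^ 2 := by
    rw [Real.exp_neg, inv_mul_eq_div, le_div_iff₀ (Real.exp_pos _), mul_comm]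
    exact h4'
  have hsq : (Real.exp (-(ε * z)) * ‖x‖) ^ 2 = Real.exp (-(2 * ε * z)) * ‖x‖ ^ 2 := by
    rw [mul_pow, sq (Real.exp _), ← Real.exp_add]
    ring_nf
  have hkey : ‖u z‖ ^ 2 ≤ (Real.exp (-(ε * z)) * ‖x‖) ^ 2 := by rw [hsq]; exact h5
  have := Real.sqrt_le_sqrt hkey
  rwa [Real.sqrt_sq (norm_nonneg _), Real.sqrt_sq (by positivity)] at this

end LPaux

open NormedSpace MeasureTheory Set Filter LPaux

local notation "⟪" x ", " y "⟫" => @inner ℂ _ _ x y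

/-- Polarized truncated Littlewood–Paley identity: for a positive invertible bounded self-adjoint
operator `S` on a complex Hilbert space and any `ω, η`,
`lim_{y → ∞} 4 ∫₀^∞ min(y,z) ⟨S e^{-zS} ω, S e^{-zS} η⟩ dz = ⟨ω, η⟩`. -/
theorem littlewood_paley_truncated_polarized
    {H : Type*} [NormedAddCommGroup H] [InnerProductSpace ℂ H] [CompleteSpace H]
    (S : H →L[ℂ] H) (hS : 0 ≤ S) (hS' : IsUnit S) (ω η : H) :
    Filter.Tendsto
      (fun y : ℝ => 4 * ∫ z in Set.Ioi (0 : ℝ),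
        ((min y z : ℝ) : ℂ) *
          inner ℂ (S (NormedSpace.exp ((-z) • S) ω)) (S (NormedSpace.exp ((-z) • S) η)))
      Filter.atTop (nhds (inner ℂ ω η : ℂ)) := by
  rcases subsingleton_or_nontrivial H with hsub | hnt
  · have hz : ∀ x : H, x = 0 := fun x => Subsingleton.elim x 0
    have h0 : ∀ z : ℝ,
        (inner ℂ (S (exp ((-z) • S) ω)) (S (exp ((-z) • S) η)) : ℂ) = 0 := fun z => by
      rw [hz (S (exp ((-z) • S) ω)), inner_zero_left]
    have heq : (fun y : ℝ => 4 * ∫ z in Set.Ioi (0 : ℝ),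
        ((min y z : ℝ) : ℂ) *
          inner ℂ (S (exp ((-z) • S) ω)) (S (exp ((-z) • S) η))) = fun _ => (0 : ℂ) := by
      funext y
      simp only [h0, mul_zero, integral_zero]
    rw [heq, hz ω]
    have : (inner ℂ (0 : H) η : ℂ) = 0 := inner_zero_left η
    rw [this]
    exact tendsto_const_nhds
  -- nontrivial case
  have hSsa : IsSelfAdjoint S := IsSelfAdjoint.of_nonneg hS
  obtain ⟨ε, hε, hco⟩ := coercive S hS hS'
  set u : ℝ → H := fun z => exp ((-z) • S) ω with hu_def
  set v : ℝ → H := fun z => exp ((-z) • S) η with hv_def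
  have hu : ∀ z, HasDerivAt u (-(S (u z))) z := fun z => hasDerivAt_exp_apply S ω z
  have hv : ∀ z, HasDerivAt v (-(S (v z))) z := fun z => hasDerivAt_exp_apply S η z
  have hu_cont : Continuous u :=
    continuous_iff_continuousAt.mpr fun z => (hu z).differentiableAt.continuousAt
  have hv_cont : Continuous v :=
    continuous_iff_continuousAt.mpr fun z => (hv z).differentiableAt.continuousAt
  set f : ℝ → ℂ := fun z => ⟪S (u z), S (v z)⟫ with hf_def
  set φ : ℝ → ℂ := fun z => ⟪u z, v z⟫ with hφ_def
  set ψ : ℝ → ℂ := fun z => (-2 : ℂ) * ⟪S (u z), v z⟫ with hψ_def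
  have hSu_cont : Continuous fun z => S (u z) := S.continuous.comp hu_cont
  have hSv_cont : Continuous fun z => S (v z) := S.continuous.comp hv_cont
  have hf_cont : Continuous f := hSu_cont.inner hSv_cont
  have hSu : ∀ z, HasDerivAt (fun z => S (u z)) (-(S (S (u z)))) z := by
    intro z
    have := (S.restrictScalars ℝ).hasFDerivAt.comp_hasDerivAt z (hu z)
    refine this.congr_deriv ?_
    simp
  have hφ' : ∀ z, HasDerivAt φ (ψ z) z := by
    intro z
    have h := HasDerivAt.inner ℂ (hu z) (hv z)
    refine h.congr_deriv ?_
    rw [hψ_def]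
    simp only [inner_neg_left, inner_neg_right]
    rw [← symm_of_sa hSsa (u z) (v z)]
    ring
  have hψ' : ∀ z, HasDerivAt ψ ((4 : ℂ) * f z) z := by
    intro z
    have h := (HasDerivAt.inner ℂ (hSu z) (hv z)).const_mul (-2 : ℂ)
    refine h.congr_deriv ?_
    simp only [inner_neg_left, inner_neg_right]
    rw [symm_of_sa hSsa (S (u z)) (v z)]
    simp only [hf_def]
    ring
  -- decay bounds
  have hud : ∀ z : ℝ, 0 ≤ z → ‖u z‖ ≤ Real.exp (-(ε * z)) * ‖ω‖ :=
    fun z hz => decay S hSsa hε hco ω hz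
  have hvd : ∀ z : ℝ, 0 ≤ z → ‖v z‖ ≤ Real.exp (-(ε * z)) * ‖η‖ :=
    fun z hz => decay S hSsa hε hco η hz
  have hexp2 : ∀ z : ℝ, Real.exp (-(ε * z)) * Real.exp (-(ε * z)) = Real.exp (-(2 * ε * z)) := by
    intro z
    rw [← Real.exp_add]
    ring_nf
  have huv : ∀ z : ℝ, 0 ≤ z → ‖u z‖ * ‖v z‖ ≤ ‖ω‖ * ‖η‖ * Real.exp (-(2 * ε * z)) := by
    intro z hz
    calc ‖u z‖ * ‖v z‖ ≤ (Real.exp (-(ε * z)) * ‖ω‖) * (Real.exp (-(ε * z)) * ‖η‖) :=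
          mul_le_mul (hud z hz) (hvd z hz) (norm_nonneg _) (by positivity)
    _ = ‖ω‖ * ‖η‖ * (Real.exp (-(ε * z)) * Real.exp (-(ε * z))) := by ring
    _ = ‖ω‖ * ‖η‖ * Real.exp (-(2 * ε * z)) := by rw [hexp2]
  have hφ_bd : ∀ z : ℝ, 0 ≤ z → ‖φ z‖ ≤ ‖ω‖ * ‖η‖ * Real.exp (-(2 * ε * z)) := by
    intro z hz
    exact (norm_inner_le_norm (𝕜 := ℂ) _ _).trans (huv z hz)
  have hψ_bd : ∀ z : ℝ, 0 ≤ z →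
      ‖ψ z‖ ≤ 2 * ‖S‖ * (‖ω‖ * ‖η‖ * Real.exp (-(2 * ε * z))) := by
    intro z hz
    rw [hψ_def]
    calc ‖(-2 : ℂ) * ⟪S (u z), v z⟫‖ = 2 * ‖⟪S (u z), v z⟫‖ := by
          rw [norm_mul]; norm_num
    _ ≤ 2 * (‖S (u z)‖ * ‖v z‖) := by
          have := norm_inner_le_norm (𝕜 := ℂ) (S (u z)) (v z)
          linarith
    _ ≤ 2 * (‖S‖ * ‖u z‖ * ‖v z‖) := by
          have h1 := S.le_opNorm (u z)
          have h2 : ‖S (u z)‖ * ‖v z‖ ≤ ‖S‖ * ‖u z‖ * ‖v z‖ :=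
            mul_le_mul_of_nonneg_right h1 (norm_nonneg _)
          linarith
    _ ≤ 2 * (‖S‖ * (‖ω‖ * ‖η‖ * Real.exp (-(2 * ε * z)))) := by
          have h3 : ‖u z‖ * ‖v z‖ ≤ ‖ω‖ * ‖η‖ * Real.exp (-(2 * ε * z)) := huv z hz
          have h4 : ‖S‖ * (‖u z‖ * ‖v z‖) ≤ ‖S‖ * (‖ω‖ * ‖η‖ * Real.exp (-(2 * ε * z))) :=
            mul_le_mul_of_nonneg_left h3 (norm_nonneg _)
          nlinarith [norm_nonneg S]
    _ = 2 * ‖S‖ * (‖ω‖ * ‖η‖ * Real.exp (-(2 * ε * z))) := by ring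
  have hf_bd : ∀ z : ℝ, 0 ≤ z →
      ‖f z‖ ≤ ‖S‖ ^ 2 * (‖ω‖ * ‖η‖) * Real.exp (-(2 * ε * z)) := by
    intro z hz
    rw [hf_def]
    calc ‖(⟪S (u z), S (v z)⟫ : ℂ)‖ ≤ ‖S (u z)‖ * ‖S (v z)‖ := norm_inner_le_norm _ _
    _ ≤ (‖S‖ * ‖u z‖) * (‖S‖ * ‖v z‖) :=
        mul_le_mul (S.le_opNorm _) (S.le_opNorm _) (norm_nonneg _) (by positivity)
    _ = ‖S‖ ^ 2 * (‖u z‖ * ‖v z‖) := by ring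
    _ ≤ ‖S‖ ^ 2 * (‖ω‖ * ‖η‖ * Real.exp (-(2 * ε * z))) :=
        mul_le_mul_of_nonneg_left (huv z hz) (by positivity)
    _ = ‖S‖ ^ 2 * (‖ω‖ * ‖η‖) * Real.exp (-(2 * ε * z)) := by ring
  -- constants and limits
  set Cf : ℝ := ‖S‖ ^ 2 * (‖ω‖ * ‖η‖) with hCf_def
  have hCf : 0 ≤ Cf := by positivity
  have htop : Tendsto (fun y : ℝ => 2 * ε * y) atTop atTop :=
    Tendsto.const_mul_atTop (by positivity) tendsto_id
  have hexp_tendsto : Tendsto (fun y : ℝ => Real.exp (-(2 * ε * y))) atTop (nhds 0) :=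
    Real.tendsto_exp_atBot.comp (tendsto_neg_atTop_atBot.comp htop)
  have hφ0 : Tendsto φ atTop (nhds 0) := by
    apply squeeze_zero_norm' ((eventually_ge_atTop 0).mono fun z hz => hφ_bd z hz)
    simpa using hexp_tendsto.const_mul (‖ω‖ * ‖η‖)
  have hψ0 : Tendsto ψ atTop (nhds 0) := by
    apply squeeze_zero_norm' ((eventually_ge_atTop 0).mono fun z hz => hψ_bd z hz)
    have := (hexp_tendsto.const_mul (‖ω‖ * ‖η‖)).const_mul (2 * ‖S‖)
    simpa [mul_assoc] using this
  -- integrability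
  have hexpI : IntegrableOn (fun z => Real.exp (-(ε * z))) (Ioi (0:ℝ)) := by
    have := exp_neg_integrableOn_Ioi 0 hε
    simpa [neg_mul] using this
  have hfI : IntegrableOn f (Ioi (0:ℝ)) := by
    apply Integrable.mono' (hexpI.const_mul Cf) hf_cont.aestronglyMeasurable
    filter_upwards [ae_restrict_mem measurableSet_Ioi] with z hz
    have h1 := hf_bd z hz.le
    have h2 : Real.exp (-(2 * ε * z)) ≤ Real.exp (-(ε * z)) := by
      apply Real.exp_le_exp.mpr
      nlinarith [(show (0:ℝ) < z from hz).le]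
    calc ‖f z‖ ≤ Cf * Real.exp (-(2 * ε * z)) := h1
    _ ≤ Cf * Real.exp (-(ε * z)) := mul_le_mul_of_nonneg_left h2 hCf
  have hzexp : ∀ z : ℝ, 0 ≤ z →
      z * Real.exp (-(2 * ε * z)) ≤ ε⁻¹ * Real.exp (-(ε * z)) := by
    intro z hz
    have h1 : ε * z ≤ Real.exp (ε * z) := by
      have := Real.add_one_le_exp (ε * z)
      linarith
    have hpos := Real.exp_pos (ε * z)
    have h2 : z * Real.exp (-(ε * z)) ≤ ε⁻¹ := by
      have h3 : z ≤ ε⁻¹ * Real.exp (ε * z) := by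
        rw [← mul_le_mul_iff_right₀ hε, ← mul_assoc, mul_inv_cancel₀ (ne_of_gt hε), one_mul]
        exact h1
      have h4 := mul_le_mul_of_nonneg_right h3 (Real.exp_nonneg (-(ε * z)))
      calc z * Real.exp (-(ε * z)) ≤ ε⁻¹ * Real.exp (ε * z) * Real.exp (-(ε * z)) := h4
      _ = ε⁻¹ := by rw [mul_assoc, ← Real.exp_add]; simp
    have h5 := mul_le_mul_of_nonneg_right h2 (Real.exp_nonneg (-(ε * z)))
    calc z * Real.exp (-(2 * ε * z)) = z * Real.exp (-(ε * z)) * Real.exp (-(ε * z)) := by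
          rw [mul_assoc z, ← hexp2 z]
    _ ≤ ε⁻¹ * Real.exp (-(ε * z)) := h5
  have hmin_abs : ∀ y z : ℝ, 0 < z → |min y z| ≤ |y| + z := by
    intro y z hz
    rcases le_total y z with h | h
    · rw [min_eq_left h]
      linarith [abs_nonneg y, hz]
    · rw [min_eq_right h]
      rw [abs_of_pos hz]
      linarith [abs_nonneg y]
  have hintegrand : ∀ y : ℝ, IntegrableOn (fun z => ((min y z : ℝ) : ℂ) * f z) (Ioi (0:ℝ)) := by
    intro y
    apply Integrable.mono' (hexpI.const_mul ((|y| + ε⁻¹) * Cf))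
    · exact ((Complex.continuous_ofReal.comp
        (continuous_const.min continuous_id)).mul hf_cont).aestronglyMeasurable
    · filter_upwards [ae_restrict_mem measurableSet_Ioi] with z hz
      have hz' : (0:ℝ) < z := hz
      have h1 := hf_bd z hz.le
      have h2 := hmin_abs y z hz
      have h3 := hzexp z hz.le
      have h4 : Real.exp (-(2 * ε * z)) ≤ Real.exp (-(ε * z)) := by
        apply Real.exp_le_exp.mpr
        nlinarith [(show (0:ℝ) < z from hz).le]
      have hnorm : ‖((min y z : ℝ) : ℂ) * f z‖ = |min y z| * ‖f z‖ := by
        rw [norm_mul, Complex.norm_real, Real.norm_eq_abs]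
      rw [hnorm]
      calc |min y z| * ‖f z‖ ≤ (|y| + z) * (Cf * Real.exp (-(2 * ε * z))) :=
            mul_le_mul h2 h1 (norm_nonneg _) (by linarith [abs_nonneg y])
      _ = Cf * (|y| * Real.exp (-(2 * ε * z))) + Cf * (z * Real.exp (-(2 * ε * z))) := by ring
      _ ≤ Cf * (|y| * Real.exp (-(ε * z))) + Cf * (ε⁻¹ * Real.exp (-(ε * z))) := by
            have b1 : |y| * Real.exp (-(2 * ε * z)) ≤ |y| * Real.exp (-(ε * z)) :=
              mul_le_mul_of_nonneg_left h4 (abs_nonneg y)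
            have b2 := mul_le_mul_of_nonneg_left b1 hCf
            have b3 := mul_le_mul_of_nonneg_left h3 hCf
            linarith
      _ = (|y| + ε⁻¹) * Cf * Real.exp (-(ε * z)) := by ring
  -- value at zero
  have hφ0val : φ 0 = (inner ℂ ω η : ℂ) := by
    rw [hφ_def]
    simp only [hu_def, hv_def]
    norm_num
  -- main identity for positive y
  have hmain : ∀ y : ℝ, 0 < y →
      (4 : ℂ) * (∫ z in Ioi (0:ℝ), ((min y z : ℝ) : ℂ) * f z) = φ 0 - φ y := by
    intro y hy
    have hA₁ : ∀ z : ℝ, HasDerivAt (fun z : ℝ => (1/4 : ℂ) * ((z : ℂ) * ψ z - φ z))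
        ((z : ℂ) * f z) z := by
      intro z
      have hzc : HasDerivAt (fun t : ℝ => (t : ℂ)) 1 z := by
        exact (hasDerivAt_id z).ofReal_comp
      have h := ((hzc.mul (hψ' z)).sub (hφ' z)).const_mul (1/4 : ℂ)
      refine h.congr_deriv ?_
      ring
    have hA₂ : ∀ z : ℝ, HasDerivAt (fun z : ℝ => ((1/4 : ℂ) * (y : ℂ)) * ψ z)
        ((y : ℂ) * f z) z := by
      intro z
      have h := (hψ' z).const_mul ((1/4 : ℂ) * (y : ℂ))
      refine h.congr_deriv ?_
      ring
    have hI1 : (∫ z in (0:ℝ)..y, (z : ℂ) * f z) =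
        (1/4 : ℂ) * ((y : ℂ) * ψ y - φ y) - (1/4 : ℂ) * ((0 : ℂ) * ψ 0 - φ 0) := by
      apply intervalIntegral.integral_eq_sub_of_hasDerivAt (fun z _ => hA₁ z)
      exact (Complex.continuous_ofReal.mul hf_cont).intervalIntegrable 0 y
    have hA₂0 : Tendsto (fun z : ℝ => ((1/4 : ℂ) * (y : ℂ)) * ψ z) atTop (nhds 0) := by
      have h := hψ0.const_mul ((1/4 : ℂ) * (y : ℂ))
      rwa [mul_zero] at h
    have hfIy : IntegrableOn (fun z => (y : ℂ) * f z) (Ioi y) :=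
      (hfI.mono_set (Ioi_subset_Ioi hy.le)).const_mul _
    have hI2 : (∫ z in Ioi y, (y : ℂ) * f z) = 0 - ((1/4 : ℂ) * (y : ℂ)) * ψ y :=
      integral_Ioi_of_hasDerivAt_of_tendsto' (fun z _ => hA₂ z) hfIy hA₂0
    have hsplit : (∫ z in Ioi (0:ℝ), ((min y z : ℝ) : ℂ) * f z)
        = (∫ z in Ioc (0:ℝ) y, ((min y z : ℝ) : ℂ) * f z)
          + ∫ z in Ioi y, ((min y z : ℝ) : ℂ) * f z := by
      rw [← setIntegral_union (Ioc_disjoint_Ioi le_rfl) measurableSet_Ioi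
          ((hintegrand y).mono_set Ioc_subset_Ioi_self)
          ((hintegrand y).mono_set (Ioi_subset_Ioi hy.le)),
        Ioc_union_Ioi_eq_Ioi hy.le]
    have e1 : (∫ z in Ioc (0:ℝ) y, ((min y z : ℝ) : ℂ) * f z)
        = ∫ z in (0:ℝ)..y, (z : ℂ) * f z := by
      rw [intervalIntegral.integral_of_le hy.le]
      apply setIntegral_congr_fun measurableSet_Ioc
      intro z hz
      simp only [min_eq_right hz.2]
    have e2 : (∫ z in Ioi y, ((min y z : ℝ) : ℂ) * f z)
        = ∫ z in Ioi y, (y : ℂ) * f z := by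
      apply setIntegral_congr_fun measurableSet_Ioi
      intro z hz
      have hyz : y ≤ z := le_of_lt hz
      simp only [min_eq_left hyz]
    rw [hsplit, e1, e2, hI1, hI2]
    ring
  -- conclusion
  have hlim : Tendsto (fun y : ℝ => φ 0 - φ y) atTop (nhds (inner ℂ ω η : ℂ)) := by
    have h := Filter.Tendsto.sub
      (tendsto_const_nhds : Tendsto (fun _ : ℝ => φ 0) atTop (nhds (φ 0))) hφ0
    rw [sub_zero, hφ0val] at h
    exact h.congr fun y => by rw [hφ0val]
  refine hlim.congr' ?_
  filter_upwards [eventually_gt_atTop 0] with y hy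
  exact (hmain y hy).symm
end
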